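/- Let H be a Hilbert space and T a bounded operator on H such that ‖h‖ ≤ ‖Th‖ for all h ∈ H, and let M be a closed nearly T⁻¹ invariant subspace of H. Then T*T is invertible, and setting R = (T*T)⁻¹ T* P and Q = P', where P is the orthogonal projection of H onto M ∩ T(H) and P' is the orthogonal projection of H onto M ⊖ (M ∩ T(H)), one has for all h ∈ M and all p ∈ ℕ: h = Σ_{k=0}^p T^k Q R^k h + T^{p+1} R^{p+1} h. -/

import Mathlib

/-- Erard's decomposition lemma. If `‖h‖ ≤ ‖Th‖` for all `h` and `M` is a
closed nearly `T⁻¹` invariant subspace, then `T*T` is invertible and, with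
`R = (T*T)⁻¹ T* P` (`P` the orthogonal projection onto `M ∩ T(H)`) and `Q = P'` (the
orthogonal projection onto `M ⊖ (M ∩ T(H))`), every `h ∈ M` satisfies
`h = Σ_{k=0}^p T^k Q R^k h + T^{p+1} R^{p+1} h` for all `p ∈ ℕ`. -/
theorem nearly_invariant_decomposition
    {H : Type*} [NormedAddCommGroup H] [InnerProductSpace ℂ H] [CompleteSpace H]
    (T : H →L[ℂ] H)
    (hT : ∀ h : H, ‖h‖ ≤ ‖T h‖)
    -- `M` is a closed nearly `T⁻¹` invariant subspace
    (M : Submodule ℂ H) (hMclosed : IsClosed (M : Set H))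
    (hnear : ∀ g : H, T g ∈ M → g ∈ M)
    -- `P` is the orthogonal projection of `H` onto `M ∩ T(H)`
    (P : H →L[ℂ] H)
    (hP1 : ∀ x : H, P x ∈ M ⊓ LinearMap.range (T : H →ₗ[ℂ] H))
    (hP2 : ∀ x : H, x - P x ∈ (M ⊓ LinearMap.range (T : H →ₗ[ℂ] H))ᗮ)
    -- `Q = P'` is the orthogonal projection of `H` onto `M ⊖ (M ∩ T(H))`
    (Q : H →L[ℂ] H)
    (hQ1 : ∀ x : H, Q x ∈ M ⊓ (M ⊓ LinearMap.range (T : H →ₗ[ℂ] H))ᗮ)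
    (hQ2 : ∀ x : H, x - Q x ∈ (M ⊓ (M ⊓ LinearMap.range (T : H →ₗ[ℂ] H))ᗮ)ᗮ) :
    -- `T*T` is invertible, and the decomposition formula holds with `R = (T*T)⁻¹ T* P`
    ∃ J : H →L[ℂ] H,
      J.comp ((ContinuousLinearMap.adjoint T).comp T) = ContinuousLinearMap.id ℂ H ∧
      ((ContinuousLinearMap.adjoint T).comp T).comp J = ContinuousLinearMap.id ℂ H ∧
      ∀ h ∈ M, ∀ p : ℕ,
        h = (∑ k ∈ Finset.range (p + 1),
              (T ^ k) (Q (((J.comp ((ContinuousLinearMap.adjoint T).comp P)) ^ k) h)))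
            + (T ^ (p + 1)) (((J.comp ((ContinuousLinearMap.adjoint T).comp P)) ^ (p + 1)) h) := by
  classical
  set N := M ⊓ LinearMap.range (T : H →ₗ[ℂ] H) with hNdef
  set S := (ContinuousLinearMap.adjoint T).comp T with hSdef
  have hSinner : ∀ h : H, RCLike.re (inner ℂ (S h) h : ℂ) = ‖T h‖ * ‖T h‖ := by
    intro h
    have : (inner ℂ (S h) h : ℂ) = inner ℂ (T h) (T h) := by
      simp [hSdef, ContinuousLinearMap.adjoint_inner_left]
    rw [this, inner_self_eq_norm_mul_norm]
  have hSlow : ∀ h : H, ‖h‖ ≤ ‖S h‖ := by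
    intro h
    rcases eq_or_ne h 0 with rfl | hh
    · simp
    have hpos : (0:ℝ) < ‖h‖ := norm_pos_iff.mpr hh
    have h1 : ‖h‖ * ‖h‖ ≤ ‖S h‖ * ‖h‖ := by
      calc ‖h‖ * ‖h‖ ≤ ‖T h‖ * ‖T h‖ := by
            nlinarith [hT h, norm_nonneg h]
        _ = RCLike.re (inner ℂ (S h) h : ℂ) := (hSinner h).symm
        _ ≤ ‖S h‖ * ‖h‖ := re_inner_le_norm _ _
    exact le_of_mul_le_mul_right h1 hpos
  have hanti : AntilipschitzWith 1 S :=
    ContinuousLinearMap.antilipschitz_of_bound S (by simpa using hSlow)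
  have hdense : (LinearMap.range (S : H →ₗ[ℂ] H)).topologicalClosure = ⊤ := by
    rw [Submodule.topologicalClosure_eq_top_iff]
    rw [Submodule.eq_bot_iff]
    intro x hx
    have h0 : (inner ℂ (S x) x : ℂ) = 0 :=
      hx (S x) (LinearMap.mem_range_self _ x)
    have hTx : ‖T x‖ * ‖T x‖ = 0 := by
      rw [← hSinner x, h0]; simp
    have : ‖x‖ ≤ 0 := by
      have := hT x
      nlinarith [norm_nonneg (T x)]
    exact norm_le_zero_iff.mp this
  have hbij : Function.Bijective S :=
    (S.bijective_iff_dense_range_and_antilipschitz).mpr ⟨hdense, 1, hanti⟩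
  let e : H ≃L[ℂ] H := ContinuousLinearEquiv.ofBijective S
    (LinearMap.ker_eq_bot.mpr hbij.1) (LinearMap.range_eq_top.mpr hbij.2)
  have he : ∀ x, e x = S x := fun x =>
    congrFun (ContinuousLinearEquiv.coeFn_ofBijective S _ _) x
  refine ⟨(e.symm : H →L[ℂ] H), ?_, ?_, ?_⟩
  · ext x
    simp only [ContinuousLinearMap.comp_apply, ContinuousLinearMap.id_apply,
      ContinuousLinearEquiv.coe_coe]
    rw [← he x, e.symm_apply_apply]
  · ext x
    simp only [ContinuousLinearMap.comp_apply, ContinuousLinearMap.id_apply,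
      ContinuousLinearEquiv.coe_coe]
    rw [← he, e.apply_symm_apply]
  · set R := ((e.symm : H →L[ℂ] H)).comp ((ContinuousLinearMap.adjoint T).comp P) with hRdef
    -- key: for all h, R h ∈ M and T (R h) = P h
    have hkey : ∀ h : H, R h ∈ M ∧ T (R h) = P h := by
      intro h
      obtain ⟨hPM, g, hg⟩ := hP1 h
      have hg' : T g = P h := hg
      have hRh : R h = g := by
        have h0 : R h = e.symm (S g) := by
          show e.symm ((ContinuousLinearMap.adjoint T) (P h)) = e.symm (S g)
          rw [← hg']
          rfl
        rw [h0, ← he g, e.symm_apply_apply]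
      constructor
      · rw [hRh]; exact hnear g (by rw [hg']; exact hPM)
      · rw [hRh, hg']
    -- decomposition: for h ∈ M, h = Q h + P h
    have hdecomp : ∀ h ∈ M, h = Q h + P h := by
      intro h hM
      set x := h - Q h - P h with hxdef
      have hxK : x ∈ M ⊓ Nᗮ := by
        constructor
        · exact M.sub_mem (M.sub_mem hM (hQ1 h).1) (hP1 h).1
        · have hx2 : x = (h - P h) - Q h := by rw [hxdef]; abel
          rw [hx2]
          exact Submodule.sub_mem _ (hP2 h) (hQ1 h).2
      have hxKo : x ∈ (M ⊓ Nᗮ)ᗮ := by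
        have hP' : P h ∈ (M ⊓ Nᗮ)ᗮ := by
          have h1 : P h ∈ Nᗮᗮ := Submodule.le_orthogonal_orthogonal N (hP1 h)
          exact (Submodule.orthogonal_le inf_le_right) h1
        exact Submodule.sub_mem _ (hQ2 h) hP'
      have hx0 : x = 0 := by
        have h0 := hxKo x hxK
        rwa [inner_self_eq_zero] at h0
      have h00 : h - Q h - P h = 0 := hx0
      exact sub_eq_zero.mp (by rw [sub_add_eq_sub_sub]; exact h00)
    intro h hM p
    -- R^k h ∈ M for all k
    have hpow : ∀ k : ℕ, (R ^ k) h ∈ M := by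
      intro k
      induction k with
      | zero => simpa using hM
      | succ n ih =>
        rw [pow_succ', ContinuousLinearMap.mul_apply]
        exact (hkey ((R ^ n) h)).1
    induction p with
    | zero =>
      simp only [zero_add, Finset.sum_range_one, pow_zero, pow_one,
        ContinuousLinearMap.one_apply]
      have h1 := hdecomp h hM
      have h2 := (hkey h).2
      rw [h2]
      exact h1
    | succ p ih =>
      rw [Finset.sum_range_succ]
      have hM' : (R ^ (p + 1)) h ∈ M := hpow (p + 1)
      have h1 := hdecomp _ hM'
      have h2 := (hkey ((R ^ (p + 1)) h)).2
      have hRpow : (R ^ (p + 2)) h = R ((R ^ (p + 1)) h) := by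
        rw [pow_succ', ContinuousLinearMap.mul_apply]
      have hTpow : ∀ x : H, (T ^ (p + 1)) (T x) = (T ^ (p + 2)) x := by
        intro x
        conv_rhs => rw [pow_succ]
        rw [ContinuousLinearMap.mul_apply]
      have step : (T ^ (p + 1)) ((R ^ (p + 1)) h)
          = (T ^ (p + 1)) (Q ((R ^ (p + 1)) h)) + (T ^ (p + 2)) ((R ^ (p + 2)) h) := by
        conv_lhs => rw [h1]
        rw [map_add, hRpow, ← h2, hTpow]
      conv_lhs => rw [ih]
      rw [step]
      abel
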